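/- Let ε > 0 and let T be a connected component of Λ_{S,ε}(A). Then for every z ∈ ℂ^s with ‖z‖ ≤ ε, the component T contains at least one eigenvalue of A + M_S(z). In particular (taking z = 0), every connected component of Λ_{S,ε}(A) contains an eigenvalue of A. -/

import Mathlib

open Matrix Polynomial Set

noncomputable def MS {n : ℕ} (S : Finset (Fin n × Fin n))
    (z : EuclideanSpace ℂ {p : Fin n × Fin n // p ∈ S}) : Matrix (Fin n) (Fin n) ℂ :=
  fun i j => if h : (i, j) ∈ S then z ⟨(i, j), h⟩ else 0

/-- The structured ε-pseudospectrum `Λ_{S,ε}(A)`. -/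
noncomputable def structPseudo {n : ℕ} (A : Matrix (Fin n) (Fin n) ℂ)
    (S : Finset (Fin n × Fin n)) (ε : ℝ) : Set ℂ :=
  ⋃ z ∈ {z : EuclideanSpace ℂ {p : Fin n × Fin n // p ∈ S} | ‖z‖ ≤ ε},
    spectrum ℂ (A + MS S z)

/-- The strict structured ε-pseudospectrum `Λ'_{S,ε}(A)`. -/
noncomputable def structPseudoStrict {n : ℕ} (A : Matrix (Fin n) (Fin n) ℂ)
    (S : Finset (Fin n × Fin n)) (ε : ℝ) : Set ℂ :=
  ⋃ z ∈ {z : EuclideanSpace ℂ {p : Fin n × Fin n // p ∈ S} | ‖z‖ < ε},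
    spectrum ℂ (A + MS S z)

/-! ### Auxiliary lemmas -/

lemma SPaux.coord_le {ι : Type*} [Fintype ι] (z : EuclideanSpace ℂ ι) (i : ι) : ‖z i‖ ≤ ‖z‖ := by
  rw [EuclideanSpace.norm_eq]
  rw [show ‖z i‖ = Real.sqrt (‖z i‖ ^ 2) by rw [Real.sqrt_sq (norm_nonneg _)]]
  exact Real.sqrt_le_sqrt (Finset.single_le_sum (f := fun j => ‖z j‖ ^ 2)
    (fun j _ => sq_nonneg _) (Finset.mem_univ i))

lemma SPaux.continuous_MS {n : ℕ} (S : Finset (Fin n × Fin n)) :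
    Continuous (MS (n := n) S) := by
  apply continuous_pi; intro i; apply continuous_pi; intro j
  unfold MS
  by_cases h : (i, j) ∈ S
  · simp only [dif_pos h]; exact (EuclideanSpace.proj (𝕜 := ℂ) (⟨(i, j), h⟩ : {p // p ∈ S})).continuous
  · simp only [dif_neg h]; exact continuous_const

lemma SPaux.MS_zero {n : ℕ} (S : Finset (Fin n × Fin n)) : MS (n := n) S 0 = 0 := by
  ext i j
  unfold MS
  by_cases h : (i, j) ∈ S <;> simp [h]

lemma SPaux.mem_spectrum_iff_det {n : ℕ} (M : Matrix (Fin n) (Fin n) ℂ) (μ : ℂ) :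
    μ ∈ spectrum ℂ M ↔ (scalar (Fin n) μ - M).det = 0 := by
  rw [spectrum.mem_iff, Matrix.isUnit_iff_isUnit_det]
  simp [Matrix.scalar, algebraMap, isUnit_iff_ne_zero]

lemma SPaux.eval_charpoly' {n : ℕ} (M : Matrix (Fin n) (Fin n) ℂ) (x : ℂ) :
    M.charpoly.eval x = (scalar (Fin n) x - M).det := by
  rw [Matrix.charpoly, eval_det, matPolyEquiv_charmatrix]
  rw [eval_sub, eval_X, eval_C]

lemma SPaux.spectrum_closed {n : ℕ} (M : Matrix (Fin n) (Fin n) ℂ) :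
    IsClosed (spectrum ℂ M) := by
  have : spectrum ℂ M = (fun μ : ℂ => (scalar (Fin n) μ - M).det) ⁻¹' {0} := by
    ext μ; simp [SPaux.mem_spectrum_iff_det]
  rw [this]
  have hc : Continuous fun μ : ℂ => (scalar (Fin n) μ - M).det := by
    apply Continuous.matrix_det
    apply Continuous.sub _ continuous_const
    apply continuous_pi; intro i; apply continuous_pi; intro j
    simp only [scalar_apply, diagonal_apply]
    by_cases h : i = j
    · simpa [h] using continuous_id'
    · simp only [if_neg h]; exact continuous_const
  exact isClosed_singleton.preimage hc

lemma SPaux.multiset_pow_le_prod {s : Multiset ℂ} {r : ℝ} (hr : 0 ≤ r)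
    (h : ∀ a ∈ s, r ≤ ‖a‖) : r ^ (Multiset.card s) ≤ ‖s.prod‖ := by
  induction s using Multiset.induction with
  | empty => simp
  | cons a s ih =>
    simp only [Multiset.prod_cons, Multiset.card_cons, pow_succ']
    calc r * r ^ Multiset.card s ≤ ‖a‖ * ‖s.prod‖ := by
          apply mul_le_mul (h a (Multiset.mem_cons_self a s))
            (ih fun b hb => h b (Multiset.mem_cons_of_mem hb))
            (pow_nonneg hr _) (norm_nonneg _)
      _ = ‖a * s.prod‖ := (norm_mul _ _).symm

lemma SPaux.persistence {n : ℕ} (M : Matrix (Fin n) (Fin n) ℂ) (μ : ℂ) (r : ℝ)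
    (hr : 0 < r) (h : ‖(scalar (Fin n) μ - M).det‖ < r ^ n) :
    ∃ lam ∈ spectrum ℂ M, ‖μ - lam‖ < r := by
  set p := M.charpoly with hp
  have hmonic : p.Monic := M.charpoly_monic
  have hsplits : p.Splits := IsAlgClosed.splits p
  have hcard : p.roots.card = n := by
    rw [splits_iff_card_roots.mp hsplits, Matrix.charpoly_natDegree_eq_dim, Fintype.card_fin]
  by_contra hcon
  push_neg at hcon
  have hfact := hsplits.eq_prod_roots_of_monic hmonic
  have heval : p.eval μ = (p.roots.map fun a => μ - a).prod := by
    conv_lhs => rw [hfact]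
    rw [eval_multiset_prod]
    simp [Multiset.map_map, Function.comp]
  have hroot_spec : ∀ a ∈ p.roots, a ∈ spectrum ℂ M := by
    intro a ha
    rw [SPaux.mem_spectrum_iff_det, ← SPaux.eval_charpoly']
    exact (mem_roots (hmonic.ne_zero)).mp ha
  have hge : r ^ n ≤ ‖p.eval μ‖ := by
    rw [heval, ← hcard, ← Multiset.card_map (fun a => μ - a) p.roots]
    apply SPaux.multiset_pow_le_prod hr.le
    intro b hb
    obtain ⟨a, ha, rfl⟩ := Multiset.mem_map.mp hb
    exact hcon a (hroot_spec a ha)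
  rw [SPaux.eval_charpoly'] at hge
  linarith [hge, h]

lemma SPaux.spec_toLin {n : ℕ} (M : Matrix (Fin n) (Fin n) ℂ) (μ : ℂ) (h : μ ∈ spectrum ℂ M) :
    Module.End.HasEigenvalue (Matrix.toLin' M) μ := by
  rw [Module.End.hasEigenvalue_iff_mem_spectrum]
  rwa [show Matrix.toLin' M = Matrix.toLinAlgEquiv' M from rfl, AlgEquiv.spectrum_eq]

lemma SPaux.spec_norm_bound {n : ℕ} (M : Matrix (Fin n) (Fin n) ℂ) (μ : ℂ)
    (h : μ ∈ spectrum ℂ M) : ‖μ‖ ≤ ∑ i : Fin n, ∑ j : Fin n, ‖M i j‖ := by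
  obtain ⟨k, hk⟩ := eigenvalue_mem_ball (SPaux.spec_toLin M μ h)
  rw [Metric.mem_closedBall] at hk
  have h1 : ‖μ‖ ≤ ‖M k k‖ + ∑ j ∈ Finset.univ.erase k, ‖M k j‖ := by
    calc ‖μ‖ ≤ ‖μ - M k k‖ + ‖M k k‖ := by
          simpa using norm_add_le (μ - M k k) (M k k)
      _ ≤ _ := by rw [add_comm]; exact add_le_add_right (by simpa [dist_eq_norm] using hk) _
  have h2 : ‖M k k‖ + ∑ j ∈ Finset.univ.erase k, ‖M k j‖ = ∑ j : Fin n, ‖M k j‖ := by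
    rw [← Finset.add_sum_erase _ _ (Finset.mem_univ k)]
  rw [h2] at h1
  refine h1.trans ?_
  exact Finset.single_le_sum (f := fun i => ∑ j : Fin n, ‖M i j‖)
    (fun i _ => Finset.sum_nonneg fun j _ => norm_nonneg _) (Finset.mem_univ k)

lemma SPaux.mem_structPseudo {n : ℕ} {A : Matrix (Fin n) (Fin n) ℂ}
    {S : Finset (Fin n × Fin n)} {ε : ℝ} {μ : ℂ} :
    μ ∈ structPseudo A S ε ↔
      ∃ z : EuclideanSpace ℂ {p : Fin n × Fin n // p ∈ S},
        ‖z‖ ≤ ε ∧ μ ∈ spectrum ℂ (A + MS S z) := by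
  simp [structPseudo]

section Main

variable {n : ℕ} (A : Matrix (Fin n) (Fin n) ℂ) (S : Finset (Fin n × Fin n)) (ε : ℝ)

lemma SPaux.continuous_detfun :
    Continuous fun p : (EuclideanSpace ℂ {p : Fin n × Fin n // p ∈ S}) × ℂ =>
      (scalar (Fin n) p.2 - (A + MS S p.1)).det := by
  apply Continuous.matrix_det
  apply Continuous.sub
  · apply continuous_pi; intro i; apply continuous_pi; intro j
    simp only [scalar_apply, diagonal_apply]
    by_cases h : i = j
    · simpa [h] using continuous_snd
    · simp only [if_neg h]; exact continuous_const
  · exact continuous_const.add ((SPaux.continuous_MS S).comp continuous_fst)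

/-- Uniform bound on eigenvalues in the structured pseudospectrum. -/
lemma SPaux.bound (hε : 0 < ε)
    (z : EuclideanSpace ℂ {p : Fin n × Fin n // p ∈ S}) (hz : ‖z‖ ≤ ε) (μ : ℂ)
    (hμ : μ ∈ spectrum ℂ (A + MS S z)) :
    ‖μ‖ ≤ (∑ i : Fin n, ∑ j : Fin n, ‖A i j‖) + n * n * ε := by
  refine (SPaux.spec_norm_bound _ μ hμ).trans ?_
  have hentry : ∀ i j, ‖(A + MS S z) i j‖ ≤ ‖A i j‖ + ε := by
    intro i j
    refine (norm_add_le _ _).trans (add_le_add_right ?_ _)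
    unfold MS
    by_cases h : (i, j) ∈ S
    · simp only [dif_pos h]
      exact (SPaux.coord_le z _).trans hz
    · simp only [dif_neg h, norm_zero]; exact hε.le
  calc ∑ i : Fin n, ∑ j : Fin n, ‖(A + MS S z) i j‖
      ≤ ∑ i : Fin n, ∑ j : Fin n, (‖A i j‖ + ε) := by
        apply Finset.sum_le_sum; intro i _
        exact Finset.sum_le_sum fun j _ => hentry i j
    _ = (∑ i : Fin n, ∑ j : Fin n, ‖A i j‖) + n * n * ε := by
        simp [Finset.sum_add_distrib, mul_assoc]

/-- The structured pseudospectrum is compact. -/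
lemma SPaux.compact (hε : 0 < ε) : IsCompact (structPseudo A S ε) := by
  set R := (∑ i : Fin n, ∑ j : Fin n, ‖A i j‖) + n * n * ε with hR
  set Sig : Set ((EuclideanSpace ℂ {p : Fin n × Fin n // p ∈ S}) × ℂ) :=
    {p | p ∈ (Metric.closedBall 0 ε) ×ˢ (Metric.closedBall 0 R) ∧
      (scalar (Fin n) p.2 - (A + MS S p.1)).det = 0} with hSig
  have hSigc : IsCompact Sig := by
    have hcl : IsClosed {p : (EuclideanSpace ℂ {p : Fin n × Fin n // p ∈ S}) × ℂ |
        (scalar (Fin n) p.2 - (A + MS S p.1)).det = 0} :=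
      isClosed_singleton.preimage (SPaux.continuous_detfun A S)
    have := ((isCompact_closedBall (0 : EuclideanSpace ℂ {p : Fin n × Fin n // p ∈ S}) ε).prod
      (isCompact_closedBall (0 : ℂ) R)).inter_right hcl
    convert this using 1
    rfl
  have himg : structPseudo A S ε = Prod.snd '' Sig := by
    ext μ
    constructor
    · intro hμ
      obtain ⟨z, hz, hspec⟩ := SPaux.mem_structPseudo.mp hμ
      refine ⟨(z, μ), ⟨⟨by simpa using hz, by
        simpa using SPaux.bound A S ε hε z hz μ hspec⟩, ?_⟩, rfl⟩
      exact (SPaux.mem_spectrum_iff_det _ _).mp hspec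
    · rintro ⟨⟨z, μ'⟩, ⟨⟨hz, _⟩, hdet⟩, rfl⟩
      exact SPaux.mem_structPseudo.mpr ⟨z, by simpa using hz,
        (SPaux.mem_spectrum_iff_det _ _).mpr hdet⟩
  rw [himg]
  exact hSigc.image continuous_snd

/-- Key step: a relatively clopen compact piece of the pseudospectrum containing an eigenvalue
for one admissible perturbation contains one for every admissible perturbation. -/
lemma SPaux.keyD (hε : 0 < ε) (U : Set ℂ) (hUcl : IsClosed U)
    (hUo : ∃ V : Set ℂ, IsOpen V ∧ U = V ∩ structPseudo A S ε)
    (z₀ : EuclideanSpace ℂ {p : Fin n × Fin n // p ∈ S}) (hz₀ : ‖z₀‖ ≤ ε)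
    (hspec₀ : ∃ μ ∈ U, μ ∈ spectrum ℂ (A + MS S z₀)) :
    ∀ z : EuclideanSpace ℂ {p : Fin n × Fin n // p ∈ S}, ‖z‖ ≤ ε →
      ∃ μ ∈ U, μ ∈ spectrum ℂ (A + MS S z) := by
  obtain ⟨V, hVo, hUV⟩ := hUo
  have hUsub : U ⊆ structPseudo A S ε := by rw [hUV]; exact inter_subset_right
  have hUcomp : IsCompact U := (SPaux.compact A S ε hε).of_isClosed_subset hUcl hUsub
  set B : Set (EuclideanSpace ℂ {p : Fin n × Fin n // p ∈ S}) := Metric.closedBall 0 ε with hB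
  set G : Set (EuclideanSpace ℂ {p : Fin n × Fin n // p ∈ S}) :=
    {z | z ∈ B ∧ ∃ μ ∈ U, μ ∈ spectrum ℂ (A + MS S z)} with hG
  -- G is compact
  have hGcomp : IsCompact G := by
    set Sig : Set ((EuclideanSpace ℂ {p : Fin n × Fin n // p ∈ S}) × ℂ) :=
      {p | p ∈ B ×ˢ U ∧ (scalar (Fin n) p.2 - (A + MS S p.1)).det = 0} with hSig
    have hSigc : IsCompact Sig := by
      have hcl : IsClosed {p : (EuclideanSpace ℂ {p : Fin n × Fin n // p ∈ S}) × ℂ |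
          (scalar (Fin n) p.2 - (A + MS S p.1)).det = 0} :=
        isClosed_singleton.preimage (SPaux.continuous_detfun A S)
      have := ((isCompact_closedBall (0 : EuclideanSpace ℂ {p : Fin n × Fin n // p ∈ S}) ε).prod
        hUcomp).inter_right hcl
      convert this using 1
      rfl
    have himg : G = Prod.fst '' Sig := by
      ext z
      constructor
      · rintro ⟨hzB, μ, hμU, hspec⟩
        exact ⟨(z, μ), ⟨⟨hzB, hμU⟩, (SPaux.mem_spectrum_iff_det _ _).mp hspec⟩, rfl⟩
      · rintro ⟨⟨z', μ⟩, ⟨⟨hzB, hμU⟩, hdet⟩, rfl⟩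
        exact ⟨hzB, μ, hμU, (SPaux.mem_spectrum_iff_det _ _).mpr hdet⟩
    rw [himg]
    exact hSigc.image continuous_fst
  -- G is relatively open in B
  have hGopen : ∀ z ∈ G, ∃ W : Set (EuclideanSpace ℂ {p : Fin n × Fin n // p ∈ S}),
      IsOpen W ∧ z ∈ W ∧ W ∩ B ⊆ G := by
    rintro z ⟨hzB, μ, hμU, hspec⟩
    have hμV : μ ∈ V := by rw [hUV] at hμU; exact hμU.1
    obtain ⟨r, hr, hball⟩ := Metric.isOpen_iff.mp hVo μ hμV
    have hdet0 : (scalar (Fin n) μ - (A + MS S z)).det = 0 :=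
      (SPaux.mem_spectrum_iff_det _ _).mp hspec
    have hcont : Continuous fun z' : EuclideanSpace ℂ {p : Fin n × Fin n // p ∈ S} =>
        ‖(scalar (Fin n) μ - (A + MS S z')).det‖ :=
      ((SPaux.continuous_detfun A S).comp (continuous_id.prodMk continuous_const)).norm
    set W := {z' : EuclideanSpace ℂ {p : Fin n × Fin n // p ∈ S} |
      ‖(scalar (Fin n) μ - (A + MS S z')).det‖ < r ^ n} with hW
    refine ⟨W, ?_, ?_, ?_⟩
    · exact isOpen_lt hcont continuous_const
    · have hlt : ‖(scalar (Fin n) μ - (A + MS S z)).det‖ < r ^ n := by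
        rw [hdet0]; simpa using pow_pos hr n
      exact hlt
    · rintro z' ⟨hz'W, hz'B⟩
      obtain ⟨lam, hlam, hnear⟩ := SPaux.persistence (A + MS S z') μ r hr hz'W
      have hlamK : lam ∈ structPseudo A S ε :=
        SPaux.mem_structPseudo.mpr ⟨z', by simpa [B] using hz'B, hlam⟩
      have hlamV : lam ∈ V := hball (by simpa [Metric.mem_ball, dist_comm, dist_eq_norm] using hnear)
      exact ⟨hz'B, lam, by rw [hUV]; exact ⟨hlamV, hlamK⟩, hlam⟩
  -- B is preconnected, G is clopen in B, so G = B
  have hBpre : IsPreconnected B := (convex_closedBall _ _).isPreconnected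
  have hBG : B ⊆ G := by
    set Vg := ⋃ z ∈ G, Classical.choose (hGopen z ‹_›)
    -- build open Vg
    by_contra hnot
    rw [Set.not_subset] at hnot
    obtain ⟨b, hbB, hbG⟩ := hnot
    -- use preconnectedness with u = union of W's, v = Gᶜ
    have hchoice : ∀ z (hz : z ∈ G), IsOpen (Classical.choose (hGopen z hz)) ∧
        z ∈ Classical.choose (hGopen z hz) ∧ Classical.choose (hGopen z hz) ∩ B ⊆ G :=
      fun z hz => Classical.choose_spec (hGopen z hz)
    set u : Set (EuclideanSpace ℂ {p : Fin n × Fin n // p ∈ S}) :=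
      ⋃ (z : _) (hz : z ∈ G), Classical.choose (hGopen z hz) with hu
    have huo : IsOpen u := isOpen_iUnion fun z => isOpen_iUnion fun hz => (hchoice z hz).1
    have hvo : IsOpen Gᶜ := hGcomp.isClosed.isOpen_compl
    have hcover : B ⊆ u ∪ Gᶜ := by
      intro x hx
      by_cases hxG : x ∈ G
      · exact Or.inl (Set.mem_iUnion.mpr ⟨x, Set.mem_iUnion.mpr ⟨hxG, (hchoice x hxG).2.1⟩⟩)
      · exact Or.inr hxG
    have hBu : (B ∩ u).Nonempty := by
      have hz₀G : z₀ ∈ G := ⟨by simpa [B] using hz₀, hspec₀⟩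
      exact ⟨z₀, by simpa [B] using hz₀,
        Set.mem_iUnion.mpr ⟨z₀, Set.mem_iUnion.mpr ⟨hz₀G, (hchoice z₀ hz₀G).2.1⟩⟩⟩
    have hBv : (B ∩ Gᶜ).Nonempty := ⟨b, hbB, hbG⟩
    obtain ⟨x, hxB, hxu, hxv⟩ := hBpre u Gᶜ huo hvo hcover hBu hBv
    obtain ⟨z, hzmem⟩ := Set.mem_iUnion.mp hxu
    obtain ⟨hzG, hxW⟩ := Set.mem_iUnion.mp hzmem
    exact hxv ((hchoice z hzG).2.2 ⟨hxW, hxB⟩)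
  intro z hz
  exact (hBG (by simpa [B] using hz)).2

end Main

/-- Every connected component of the structured ε-pseudospectrum contains an eigenvalue of
`A + M_S(z)` for each `z` with `‖z‖ ≤ ε`; in particular it contains an eigenvalue of `A`. -/
theorem component_contains_eigenvalue {n : ℕ} (A : Matrix (Fin n) (Fin n) ℂ)
    (S : Finset (Fin n × Fin n)) (ε : ℝ) (hε : 0 < ε) (T : Set ℂ)
    (hT : ∃ w ∈ structPseudo A S ε, T = connectedComponentIn (structPseudo A S ε) w) :
    (∀ z : EuclideanSpace ℂ {p : Fin n × Fin n // p ∈ S}, ‖z‖ ≤ ε →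
      ∃ μ ∈ T, μ ∈ spectrum ℂ (A + MS S z)) ∧ ∃ μ ∈ T, μ ∈ spectrum ℂ A := by
  obtain ⟨w, hw, hTdef⟩ := hT
  set K := structPseudo A S ε with hK
  have hKcomp : IsCompact K := SPaux.compact A S ε hε
  haveI : CompactSpace K := isCompact_iff_compactSpace.mp hKcomp
  obtain ⟨z₀, hz₀, hwspec⟩ := SPaux.mem_structPseudo.mp hw
  set x : K := ⟨w, hw⟩ with hx
  have hTimg : T = Subtype.val '' connectedComponent x := by
    rw [hTdef, connectedComponentIn_eq_image hw]
  have main : ∀ z : EuclideanSpace ℂ {p : Fin n × Fin n // p ∈ S}, ‖z‖ ≤ ε →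
      ∃ μ ∈ T, μ ∈ spectrum ℂ (A + MS S z) := by
    intro z hz
    set ι := {s : Set K // IsClopen s ∧ x ∈ s} with hι
    haveI : Nonempty ι := ⟨⟨univ, isClopen_univ, mem_univ x⟩⟩
    set F : ι → Set ℂ := fun Z => (Subtype.val '' Z.1) ∩ spectrum ℂ (A + MS S z) with hF
    -- facts about val '' Z for clopen Z
    have himgc : ∀ Z : ι, IsCompact (Subtype.val '' Z.1) := by
      intro Z
      exact (Z.2.1.1.isCompact).image continuous_subtype_val
    have himgcl : ∀ Z : ι, IsClosed (Subtype.val '' Z.1) := fun Z => (himgc Z).isClosed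
    have himgopen : ∀ Z : ι, ∃ V : Set ℂ, IsOpen V ∧ Subtype.val '' Z.1 = V ∩ K := by
      intro Z
      obtain ⟨V, hVo, hVeq⟩ := isOpen_induced_iff.mp Z.2.1.2
      refine ⟨V, hVo, ?_⟩
      rw [← hVeq]
      rw [Subtype.image_preimage_coe]
      exact inter_comm _ _
    have hFne : ∀ Z : ι, (F Z).Nonempty := by
      intro Z
      obtain ⟨μ, hμ, hμs⟩ := SPaux.keyD A S ε hε (Subtype.val '' Z.1) (himgcl Z)
        (himgopen Z) z₀ hz₀ ⟨w, ⟨x, Z.2.2, rfl⟩, hwspec⟩ z hz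
      exact ⟨μ, hμ, hμs⟩
    have hFcomp : ∀ Z : ι, IsCompact (F Z) :=
      fun Z => (himgc Z).inter_right (SPaux.spectrum_closed _)
    have hFcl : ∀ Z : ι, IsClosed (F Z) :=
      fun Z => (himgcl Z).inter (SPaux.spectrum_closed _)
    have hFdir : Directed (· ⊇ ·) F := by
      intro Z₁ Z₂
      refine ⟨⟨Z₁.1 ∩ Z₂.1, Z₁.2.1.inter Z₂.2.1, ⟨Z₁.2.2, Z₂.2.2⟩⟩, ?_, ?_⟩
      · exact inter_subset_inter (image_mono inter_subset_left) le_rfl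
      · exact inter_subset_inter (image_mono inter_subset_right) le_rfl
    obtain ⟨μ, hμ⟩ := IsCompact.nonempty_iInter_of_directed_nonempty_isCompact_isClosed
      F hFdir hFne hFcomp hFcl
    have hμspec : μ ∈ spectrum ℂ (A + MS S z) :=
      (mem_iInter.mp hμ ⟨univ, isClopen_univ, mem_univ x⟩).2
    have hμall : ∀ Z : ι, μ ∈ Subtype.val '' Z.1 := fun Z => (mem_iInter.mp hμ Z).1
    obtain ⟨m, _, hm⟩ := hμall ⟨univ, isClopen_univ, mem_univ x⟩
    have hmem : ∀ Z : ι, m ∈ Z.1 := by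
      intro Z
      obtain ⟨m', hm', hmeq⟩ := hμall Z
      rwa [show m' = m from Subtype.val_injective (hmeq.trans hm.symm)] at hm'
    have hmT : (m : ℂ) ∈ T := by
      rw [hTimg]
      refine ⟨m, ?_, rfl⟩
      rw [connectedComponent_eq_iInter_isClopen x]
      exact mem_iInter.mpr fun Z => hmem Z
    exact ⟨μ, hm ▸ hmT, hμspec⟩
  refine ⟨main, ?_⟩
  obtain ⟨μ, hμT, hμs⟩ := main 0 (by simpa using hε.le)
  rw [SPaux.MS_zero, add_zero] at hμs
  exact ⟨μ, hμT, hμs⟩
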